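/- Let (M_i)_{i ∈ I} be a family of n×n complex matrices. There exists a unitary n×n matrix Θ′ such that Θ′⁻¹·M_i·Θ′ is diagonal for every i ∈ I if and only if there exists a unitary n×n matrix Θ whose n eigenvalues are pairwise distinct and which commutes with every M_i (Θ·M_i = M_i·Θ for all i ∈ I). -/

import Mathlib

open Matrix

section Helpers

open Polynomial

lemma eval_charpoly' {n : ℕ} (M : Matrix (Fin n) (Fin n) ℂ) (t : ℂ) :
    M.charpoly.eval t = (t • (1 : Matrix (Fin n) (Fin n) ℂ) - M).det := by
  have : M.charpoly.eval t = ((charmatrix M).map (Polynomial.evalRingHom t)).det := by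
    have h2 := RingHom.map_det (Polynomial.evalRingHom t) (charmatrix M)
    rw [Matrix.charpoly]
    exact h2
  rw [this]
  congr 1
  ext i j
  by_cases h : i = j
  · subst h; simp [charmatrix_apply_eq, Matrix.one_apply]
  · simp [charmatrix_apply_ne _ _ _ h, Matrix.one_apply, h]

lemma exists_eigvec {n : ℕ} (M : Matrix (Fin n) (Fin n) ℂ) {μ : ℂ}
    (h : μ ∈ M.charpoly.roots) : ∃ v, v ≠ 0 ∧ M.mulVec v = μ • v := by
  have hroot : M.charpoly.eval μ = 0 := by
    have := Polynomial.isRoot_of_mem_roots h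
    exact this
  rw [eval_charpoly' M μ] at hroot
  obtain ⟨v, hv, hv0⟩ := (Matrix.exists_mulVec_eq_zero_iff).mpr hroot
  refine ⟨v, hv, ?_⟩
  have := hv0
  rw [Matrix.sub_mulVec, sub_eq_zero, Matrix.smul_mulVec, Matrix.one_mulVec] at this
  exact this.symm

lemma ip_mulVec {n : ℕ} {Θ : Matrix (Fin n) (Fin n) ℂ} (h : Θᴴ * Θ = 1) (x y : Fin n → ℂ) :
    star (Θ.mulVec x) ⬝ᵥ (Θ.mulVec y) = star x ⬝ᵥ y := by
  rw [Matrix.star_mulVec, Matrix.dotProduct_mulVec, Matrix.vecMul_vecMul, h,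
    Matrix.vecMul_one]

lemma ip_self_ne_zero {n : ℕ} {v : Fin n → ℂ} (hv : v ≠ 0) : star v ⬝ᵥ v ≠ 0 := by
  intro h
  simp only [dotProduct, Pi.star_apply, Complex.star_def, ← Complex.normSq_eq_conj_mul_self] at h
  apply hv
  funext i
  have hsum : ∑ j, (Complex.normSq (v j) : ℂ) = 0 := h
  have : ∀ j ∈ Finset.univ, (0:ℝ) ≤ Complex.normSq (v j) := fun j _ => Complex.normSq_nonneg _
  have hre : ∑ j, Complex.normSq (v j) = 0 := by
    have := congrArg Complex.re hsum
    simpa using this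
  have := (Finset.sum_eq_zero_iff_of_nonneg this).1 hre i (Finset.mem_univ i)
  exact Complex.normSq_eq_zero.mp this

lemma backward_dir {n : ℕ} {I : Type*} (M : I → Matrix (Fin n) (Fin n) ℂ)
    (Θ : Matrix (Fin n) (Fin n) ℂ) (h1 : Θ * Θᴴ = 1) (h2 : Θᴴ * Θ = 1)
    (hcard : Θ.charpoly.roots.toFinset.card = n) (hcomm : ∀ i, Θ * M i = M i * Θ) :
    ∃ Θ' : Matrix (Fin n) (Fin n) ℂ, Θ' * Θ'ᴴ = 1 ∧ Θ'ᴴ * Θ' = 1 ∧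
       ∀ i, (Θ'⁻¹ * M i * Θ').IsDiag := by
  classical
  set e := Finset.equivFinOfCardEq hcard with he
  set lam : Fin n → ℂ := fun k => (e.symm k : ℂ) with hlam
  have hlam_inj : Function.Injective lam := by
    intro a b h
    have : e.symm a = e.symm b := Subtype.ext h
    exact e.symm.injective this
  have hlam_mem : ∀ k, lam k ∈ Θ.charpoly.roots := fun k =>
    Multiset.mem_toFinset.mp (e.symm k).2
  choose v hv0 hvΘ using fun k => exists_eigvec Θ (hlam_mem k)
  set t : Fin n → ℝ := fun k => ∑ j, Complex.normSq (v k j) with ht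
  have hct : ∀ k, star (v k) ⬝ᵥ v k = (t k : ℂ) := by
    intro k
    simp only [dotProduct, Pi.star_apply, Complex.star_def,
      ← Complex.normSq_eq_conj_mul_self, ht]
    push_cast
    ring
  have ht_pos : ∀ k, 0 < t k := by
    intro k
    rcases (Finset.sum_nonneg fun j _ => Complex.normSq_nonneg (v k j)).lt_or_eq with h | h
    · exact h
    · exfalso
      apply ip_self_ne_zero (hv0 k)
      rw [hct k]
      exact_mod_cast h.symm
  set s : Fin n → ℝ := fun k => (Real.sqrt (t k))⁻¹ with hs
  have hs_pos : ∀ k, 0 < s k := fun k => inv_pos.mpr (Real.sqrt_pos.mpr (ht_pos k))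
  set u : Fin n → Fin n → ℂ := fun k => (s k : ℂ) • v k with hu
  have hu_eig : ∀ k, Θ.mulVec (u k) = lam k • u k := by
    intro k
    rw [hu]
    simp only [Matrix.mulVec_smul, hvΘ k]
    rw [smul_comm]
  have hu_ip : ∀ k l, star (u k) ⬝ᵥ u l = (s k : ℂ) * (s l : ℂ) * (star (v k) ⬝ᵥ v l) := by
    intro k l
    simp only [hu, star_smul, smul_dotProduct, dotProduct_smul,
      Complex.star_def, Complex.conj_ofReal, smul_eq_mul]
    ring
  have hip_rel : ∀ k l, star (u k) ⬝ᵥ u l =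
      (starRingEnd ℂ) (lam k) * lam l * (star (u k) ⬝ᵥ u l) := by
    intro k l
    conv_lhs => rw [← ip_mulVec h2 (u k) (u l), hu_eig k, hu_eig l]
    simp only [star_smul, smul_dotProduct, dotProduct_smul,
      smul_eq_mul, Complex.star_def]
    ring
  have hu_self_ne : ∀ k, star (u k) ⬝ᵥ u k ≠ 0 := by
    intro k
    apply ip_self_ne_zero
    exact smul_ne_zero (by exact_mod_cast (hs_pos k).ne') (hv0 k)
  have hmod : ∀ k, (starRingEnd ℂ) (lam k) * lam k = 1 := by
    intro k
    have h := hip_rel k k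
    have h' : ((starRingEnd ℂ) (lam k) * lam k - 1) * (star (u k) ⬝ᵥ u k) = 0 := by
      rw [sub_mul, one_mul]; linear_combination -h
    rcases mul_eq_zero.mp h' with h'' | h''
    · exact sub_eq_zero.mp h''
    · exact absurd h'' (hu_self_ne k)
  have horth : ∀ k l, k ≠ l → star (u k) ⬝ᵥ u l = 0 := by
    intro k l hkl
    by_contra hne
    have h := hip_rel k l
    have h' : ((starRingEnd ℂ) (lam k) * lam l - 1) * (star (u k) ⬝ᵥ u l) = 0 := by
      rw [sub_mul, one_mul]; linear_combination -h
    rcases mul_eq_zero.mp h' with h'' | h''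
    · have h3 : (starRingEnd ℂ) (lam k) * lam l = (starRingEnd ℂ) (lam k) * lam k := by
        rw [sub_eq_zero.mp h'', hmod k]
      have hconj_ne : (starRingEnd ℂ) (lam k) ≠ 0 := by
        intro hz
        rw [hz, zero_mul] at h3
        rw [hz, zero_mul] at h''
        simp at h''
      exact hkl (hlam_inj (mul_left_cancel₀ hconj_ne h3)).symm
    · exact hne h''
  have hnorm : ∀ k, star (u k) ⬝ᵥ u k = 1 := by
    intro k
    rw [hu_ip k k, hct k]
    have : (s k * s k * t k : ℝ) = 1 := by
      rw [hs]
      field_simp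
      rw [Real.sq_sqrt (ht_pos k).le]
      exact div_self (ht_pos k).ne'
    calc (s k : ℂ) * (s k : ℂ) * (t k : ℂ) = ((s k * s k * t k : ℝ) : ℂ) := by push_cast; ring
    _ = 1 := by rw [this]; norm_num
  set Θ' : Matrix (Fin n) (Fin n) ℂ := Matrix.of (fun p q => u q p) with hΘ'
  have hunit2 : Θ'ᴴ * Θ' = 1 := by
    ext j k
    simp only [Matrix.mul_apply, Matrix.conjTranspose_apply, Matrix.of_apply, hΘ']
    have : ∑ l, star (u j l) * u k l = star (u j) ⬝ᵥ u k := rfl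
    rw [this]
    by_cases hjk : j = k
    · subst hjk; rw [hnorm j, Matrix.one_apply_eq]
    · rw [horth j k hjk, Matrix.one_apply_ne hjk]
  have hunit1 : Θ' * Θ'ᴴ = 1 := mul_eq_one_comm.mpr hunit2
  have hinv : Θ'⁻¹ = Θ'ᴴ := Matrix.inv_eq_left_inv hunit2
  have hΘΘ' : Θ * Θ' = Θ' * Matrix.diagonal lam := by
    ext j k
    have hjk := congrFun (hu_eig k) j
    simp only [Matrix.mulVec, dotProduct, Pi.smul_apply, smul_eq_mul] at hjk
    rw [Matrix.mul_apply, Matrix.mul_diagonal]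
    simp only [hΘ', Matrix.of_apply]
    rw [hjk]
    ring
  have hD : Θ'ᴴ * Θ * Θ' = Matrix.diagonal lam := by
    rw [Matrix.mul_assoc, hΘΘ', ← Matrix.mul_assoc, hunit2, Matrix.one_mul]
  refine ⟨Θ', hunit1, hunit2, fun i => ?_⟩
  rw [hinv]
  have cancel : ∀ X : Matrix (Fin n) (Fin n) ℂ, Θ' * (Θ'ᴴ * X) = X := fun X => by
    rw [← Matrix.mul_assoc, hunit1, Matrix.one_mul]
  have hcom : Matrix.diagonal lam * (Θ'ᴴ * M i * Θ') = (Θ'ᴴ * M i * Θ') * Matrix.diagonal lam := by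
    rw [← hD]
    simp only [Matrix.mul_assoc, cancel]
    rw [← Matrix.mul_assoc Θ (M i), hcomm i, Matrix.mul_assoc]
  intro j k hjk
  have h := congrFun (congrFun hcom j) k
  simp only [Matrix.diagonal_mul, Matrix.mul_diagonal] at h
  have hlamne : lam j ≠ lam k := fun hh => hjk (hlam_inj hh)
  have h' : (lam j - lam k) * (Θ'ᴴ * M i * Θ') j k = 0 := by linear_combination h
  rcases mul_eq_zero.mp h' with h'' | h''
  · exact absurd (sub_eq_zero.mp h'') hlamne
  · exact h''

lemma charpoly_conj_unit {n : ℕ} (P A Q : Matrix (Fin n) (Fin n) ℂ)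
    (hPQ : P * Q = 1) : (P * A * Q).charpoly = A.charpoly := by
  classical
  have hmapPQ : P.map Polynomial.C * Q.map Polynomial.C = 1 := by
    rw [← Matrix.map_mul, hPQ, Matrix.map_one _ (map_zero _) (map_one _)]
  have key : charmatrix (P * A * Q) =
      P.map Polynomial.C * charmatrix A * Q.map Polynomial.C := by
    rw [charmatrix, charmatrix]
    have h1 : (C : ℂ →+* ℂ[X]).mapMatrix (P * A * Q) =
        P.map Polynomial.C * (C : ℂ →+* ℂ[X]).mapMatrix A * Q.map Polynomial.C := by
      simp [RingHom.mapMatrix_apply, Matrix.map_mul]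
    rw [h1, Matrix.mul_sub, Matrix.sub_mul]
    congr 1
    have hc := (Matrix.scalar_commute (X : ℂ[X]) (fun r' => Commute.all _ _)
      (P.map Polynomial.C)).eq
    rw [← hc, Matrix.mul_assoc, hmapPQ, Matrix.mul_one]
  rw [Matrix.charpoly, Matrix.charpoly, key, Matrix.det_mul, Matrix.det_mul]
  have : (P.map Polynomial.C).det * (Q.map Polynomial.C).det = 1 := by
    rw [← Matrix.det_mul, hmapPQ, Matrix.det_one]
  calc (P.map Polynomial.C).det * (charmatrix A).det * (Q.map Polynomial.C).det
      = ((P.map Polynomial.C).det * (Q.map Polynomial.C).det) * (charmatrix A).det := by ring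
    _ = (charmatrix A).det := by rw [this, one_mul]

lemma forward_dir {n : ℕ} {I : Type*} (M : I → Matrix (Fin n) (Fin n) ℂ)
    (Θ' : Matrix (Fin n) (Fin n) ℂ) (h1 : Θ' * Θ'ᴴ = 1) (h2 : Θ'ᴴ * Θ' = 1)
    (hdiag : ∀ i, (Θ'⁻¹ * M i * Θ').IsDiag) :
    ∃ Θ : Matrix (Fin n) (Fin n) ℂ, Θ * Θᴴ = 1 ∧ Θᴴ * Θ = 1 ∧
       Θ.charpoly.roots.toFinset.card = n ∧ ∀ i, Θ * M i = M i * Θ := by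
  classical
  rcases Nat.eq_zero_or_pos n with hn | hn
  · subst hn
    refine ⟨1, by simp, by simp, ?_, fun i => by rw [one_mul, mul_one]⟩
    have h : (1 : Matrix (Fin 0) (Fin 0) ℂ).charpoly = 1 := by
      rw [Matrix.charpoly, Matrix.det_isEmpty]
    rw [h, Polynomial.roots_one]
    simp
  · have hn0 : n ≠ 0 := hn.ne'
    set ζ : ℂ := Complex.exp (2 * Real.pi * Complex.I / n) with hζdef
    have hζ : IsPrimitiveRoot ζ n := Complex.isPrimitiveRoot_exp n hn0
    have hζabs : ‖ζ‖ = 1 := by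
      have hform : (2 * (Real.pi:ℂ) * Complex.I / n) = ((2 * Real.pi / n : ℝ) : ℂ) * Complex.I := by
        push_cast; ring
      rw [hζdef, hform, Complex.norm_exp_ofReal_mul_I]
    have hζs : ζ * star ζ = 1 := by
      rw [Complex.star_def, Complex.mul_conj, Complex.normSq_eq_norm_sq, hζabs]
      norm_num
    set d : Fin n → ℂ := fun j => ζ ^ (j : ℕ) with hd
    have hd_inj : Function.Injective d := by
      intro a b h
      exact Fin.ext (hζ.pow_inj a.isLt b.isLt h)
    have hd_unit : ∀ j, d j * star (d j) = 1 := by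
      intro j
      rw [hd]
      simp only [star_pow, ← mul_pow, hζs, one_pow]
    set D := Matrix.diagonal d with hDdef
    set D' := Matrix.diagonal (star d) with hD'def
    have hDD : D * D' = 1 := by
      have hfe : (fun i => d i * star d i) = fun _ => (1:ℂ) := funext hd_unit
      rw [hDdef, hD'def, Matrix.diagonal_mul_diagonal, hfe, Matrix.diagonal_one]
    have hDD' : D' * D = 1 := by
      have hfe : (fun i => star d i * d i) = fun _ => (1:ℂ) :=
        funext fun j => by rw [mul_comm]; exact hd_unit j
      rw [hDdef, hD'def, Matrix.diagonal_mul_diagonal, hfe, Matrix.diagonal_one]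
    have cancel1 : ∀ X : Matrix (Fin n) (Fin n) ℂ, Θ' * (Θ'ᴴ * X) = X := fun X => by
      rw [← Matrix.mul_assoc, h1, Matrix.one_mul]
    have cancel2 : ∀ X : Matrix (Fin n) (Fin n) ℂ, Θ'ᴴ * (Θ' * X) = X := fun X => by
      rw [← Matrix.mul_assoc, h2, Matrix.one_mul]
    set Θ := Θ' * D * Θ'ᴴ with hΘdef
    have hΘH : Θᴴ = Θ' * D' * Θ'ᴴ := by
      rw [hΘdef, Matrix.conjTranspose_mul, Matrix.conjTranspose_mul,
        Matrix.conjTranspose_conjTranspose, hDdef, Matrix.diagonal_conjTranspose,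
        Matrix.mul_assoc, hD'def]
    refine ⟨Θ, ?_, ?_, ?_, ?_⟩
    · rw [hΘH, hΘdef]
      simp only [Matrix.mul_assoc, cancel2]
      rw [← Matrix.mul_assoc D D', hDD, Matrix.one_mul, h1]
    · rw [hΘH, hΘdef]
      simp only [Matrix.mul_assoc, cancel2]
      rw [← Matrix.mul_assoc D' D, hDD', Matrix.one_mul, h1]
    · have hcp : Θ.charpoly = D.charpoly := by
        rw [hΘdef]
        exact charpoly_conj_unit Θ' D Θ'ᴴ h1
      have hDcp : D.charpoly = ∏ i : Fin n, (Polynomial.X - Polynomial.C (d i)) := by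
        have h0 := Matrix.charpoly_of_upperTriangular D (Matrix.blockTriangular_diagonal d)
        simpa [hDdef, Matrix.diagonal_apply_eq] using h0
      have hroots : D.charpoly.roots = Finset.univ.val.map d := by
        rw [hDcp]
        have : ∏ i : Fin n, (Polynomial.X - Polynomial.C (d i)) =
            ((Finset.univ.val.map d).map (fun a => Polynomial.X - Polynomial.C a)).prod := by
          rw [Multiset.map_map]
          rfl
        rw [this, Polynomial.roots_multiset_prod_X_sub_C]
      rw [hcp, hroots]
      rw [Multiset.toFinset_card_of_nodup (Multiset.Nodup.map hd_inj Finset.univ.nodup)]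
      simp
    · intro i
      have hinv : Θ'⁻¹ = Θ'ᴴ := Matrix.inv_eq_left_inv h2
      have hNdiag : (Θ'ᴴ * M i * Θ').IsDiag := by rw [← hinv]; exact hdiag i
      set N := Θ'ᴴ * M i * Θ' with hNdef
      have hM : Θ' * (N * Θ'ᴴ) = M i := by
        rw [hNdef]
        simp only [Matrix.mul_assoc, cancel1]
        rw [h1, Matrix.mul_one]
      have hDN : D * N = N * D := by
        have hfg : (fun i => d i * N.diag i) = fun i => N.diag i * d i :=
          funext fun j => mul_comm _ _
        rw [← hNdiag.diagonal_diag, hDdef, Matrix.diagonal_mul_diagonal,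
          Matrix.diagonal_mul_diagonal, hfg]
      rw [hΘdef, ← hM]
      simp only [Matrix.mul_assoc, cancel2]
      rw [← Matrix.mul_assoc D N, hDN, Matrix.mul_assoc]

end Helpers

/-- A family of n×n complex matrices is simultaneously unitarily diagonalizable iff
there is a unitary matrix with pairwise distinct (non-degenerate) eigenvalues commuting
with every member of the family. -/
theorem simultaneously_diagonalizable_iff_commuting_unitary {n : ℕ} {I : Type*}
    (M : I → Matrix (Fin n) (Fin n) ℂ) :
    (∃ Θ' : Matrix (Fin n) (Fin n) ℂ, Θ' * Θ'ᴴ = 1 ∧ Θ'ᴴ * Θ' = 1 ∧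
       ∀ i, (Θ'⁻¹ * M i * Θ').IsDiag) ↔
    (∃ Θ : Matrix (Fin n) (Fin n) ℂ, Θ * Θᴴ = 1 ∧ Θᴴ * Θ = 1 ∧
       Θ.charpoly.roots.toFinset.card = n ∧
       ∀ i, Θ * M i = M i * Θ) := by
  constructor
  · rintro ⟨Θ', h1, h2, hdiag⟩
    exact forward_dir M Θ' h1 h2 hdiag
  · rintro ⟨Θ, h1, h2, hcard, hcomm⟩
    exact backward_dir M Θ h1 h2 hcard hcomm
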